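/- Let X be a finite set, T : X → X a bijection, ν : X → X a fixed-point-free involution commuting with T, and P ⊆ X a subset such that ν(P) equals the complement X \ P. Let O ⊆ X be an orbit of the cyclic group generated by T such that O ∩ ν(O) = ∅. Then the set {x ∈ O ∪ ν(O) : x ∈ P and T(x) ∉ P} has even cardinality. -/
import Mathlib

open Classical in
/-- On a finite `T`-invariant set, the number of points entering `P` equals the
number of points leaving `P`. -/
lemma cross_balance {X : Type*} [Fintype X] (T : Equiv.Perm X) (P S : Set X)
    (hS : ∀ x ∈ S, T x ∈ S) :
    Set.ncard {x | x ∈ S ∧ x ∈ P ∧ T x ∉ P} = Set.ncard {x | x ∈ S ∧ x ∉ P ∧ T x ∈ P} := by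
  classical
  set s : Finset X := Finset.univ.filter (· ∈ S) with hs_def
  have hsub : s.image T ⊆ s := by
    intro y hy
    simp only [Finset.mem_image, hs_def, Finset.mem_filter, Finset.mem_univ, true_and] at hy ⊢
    obtain ⟨x, hx, rfl⟩ := hy
    exact hS x hx
  have hs : s.image T = s := by
    apply Finset.eq_of_subset_of_card_le hsub
    rw [Finset.card_image_of_injective _ T.injective]
  have key : (s.filter fun x => x ∈ P).card = (s.filter fun x => T x ∈ P).card := by
    have h1 : ((s.filter fun x => T x ∈ P).image T).card = (s.filter fun x => T x ∈ P).card :=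
      Finset.card_image_of_injective _ T.injective
    have h2 : (s.filter fun x => T x ∈ P).image T = s.filter fun x => x ∈ P := by
      ext y
      simp only [Finset.mem_image, Finset.mem_filter, hs_def, Finset.mem_univ, true_and]
      constructor
      · rintro ⟨x, ⟨hx, hxP⟩, rfl⟩
        exact ⟨hS x hx, hxP⟩
      · rintro ⟨hy, hyP⟩
        have : y ∈ s.image T := by rw [hs]; simp [hs_def, hy]
        simp only [Finset.mem_image, hs_def, Finset.mem_filter, Finset.mem_univ, true_and] at this
        obtain ⟨x, hx, rfl⟩ := this
        exact ⟨x, ⟨hx, hyP⟩, rfl⟩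
    rw [← h2, h1]
  have part : ∀ (t : Finset X) (f : X → X),
      (t.filter fun x => f x ∈ P).card + (t.filter fun x => f x ∈ Pᶜ).card = t.card := by
    intro t f
    have hd : Disjoint (t.filter fun x => f x ∈ P) (t.filter fun x => f x ∈ Pᶜ) := by
      simp only [Finset.disjoint_left, Finset.mem_filter, Set.mem_compl_iff]
      rintro x ⟨-, hp⟩ ⟨-, hc⟩
      exact hc hp
    rw [← Finset.card_union_of_disjoint hd]
    congr 1
    ext x
    simp only [Finset.mem_union, Finset.mem_filter, Set.mem_compl_iff]
    tauto
  have split1 : ((s.filter fun x => x ∈ P).filter fun x => T x ∈ P).card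
      + ((s.filter fun x => x ∈ P).filter fun x => T x ∈ Pᶜ).card
      = (s.filter fun x => x ∈ P).card := part _ T
  have split2 : ((s.filter fun x => T x ∈ P).filter fun x => x ∈ P).card
      + ((s.filter fun x => T x ∈ P).filter fun x => x ∈ Pᶜ).card
      = (s.filter fun x => T x ∈ P).card := part _ id
  have e1 : ((s.filter fun x => x ∈ P).filter fun x => T x ∈ P)
      = ((s.filter fun x => T x ∈ P).filter fun x => x ∈ P) := by
    ext x
    simp only [Finset.mem_filter]
    tauto
  have lhs_eq : Set.ncard {x | x ∈ S ∧ x ∈ P ∧ T x ∉ P}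
      = ((s.filter fun x => x ∈ P).filter fun x => T x ∈ Pᶜ).card := by
    rw [Set.ncard_eq_toFinset_card']
    congr 1
    ext x
    simp only [Set.mem_setOf_eq, Set.mem_toFinset, Finset.mem_filter, hs_def,
      Finset.mem_univ, true_and, Set.mem_compl_iff]
    tauto
  have rhs_eq : Set.ncard {x | x ∈ S ∧ x ∉ P ∧ T x ∈ P}
      = ((s.filter fun x => T x ∈ P).filter fun x => x ∈ Pᶜ).card := by
    rw [Set.ncard_eq_toFinset_card']
    congr 1
    ext x
    simp only [Set.mem_setOf_eq, Set.mem_toFinset, Finset.mem_filter, hs_def,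
      Finset.mem_univ, true_and, Set.mem_compl_iff]
    tauto
  rw [e1, key] at split1
  rw [lhs_eq, rhs_eq]
  omega

/-- Let `T` be a permutation of a finite set `X`, `ν` a fixed-point-free involution
commuting with `T`, and `P ⊆ X` with `ν '' P = Pᶜ`. If `O` is an orbit of the cyclic
group generated by `T` with `O ∩ ν '' O = ∅` (an asymmetric orbit), then the set of
`x ∈ O ∪ ν '' O` with `x ∈ P` and `T x ∉ P` has even cardinality. -/
theorem asymmetric_orbit_even_transitions {X : Type*} [Fintype X]
    (T : Equiv.Perm X) (ν : X → X)
    (hν_inv : Function.Involutive ν) (hν_fp : ∀ x, ν x ≠ x)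
    (hcomm : ∀ x, ν (T x) = T (ν x))
    (P : Set X) (hP : ν '' P = Pᶜ)
    (a : X) (O : Set X) (hO : O = Set.range (fun n : ℤ => (T ^ n) a))
    (hdisj : O ∩ (ν '' O) = ∅) :
    Even (Set.ncard {x | x ∈ O ∪ ν '' O ∧ x ∈ P ∧ T x ∉ P}) := by
  classical
  -- ν exchanges P and its complement
  have hνP : ∀ x, x ∈ P ↔ ν x ∉ P := by
    intro x
    constructor
    · intro hx hνx
      have : ν x ∈ Pᶜ := hP ▸ ⟨x, hx, rfl⟩
      exact this hνx
    · intro hx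
      have : ν x ∈ Pᶜ := hx
      rw [← hP] at this
      obtain ⟨p, hp, hpe⟩ := this
      have : p = x := hν_inv.injective hpe
      rwa [← this]
  have hνP' : ∀ x, x ∉ P ↔ ν x ∈ P := by
    intro x
    have h := hνP (ν x)
    rw [hν_inv x] at h
    tauto
  -- T-invariance of O and ν '' O
  have hTO : ∀ x ∈ O, T x ∈ O := by
    intro x hx
    rw [hO] at hx ⊢
    obtain ⟨n, rfl⟩ := hx
    refine ⟨1 + n, ?_⟩
    show (T ^ (1 + n)) a = T ((T ^ n) a)
    rw [zpow_one_add]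
    rfl
  have hTνO : ∀ x ∈ ν '' O, T x ∈ ν '' O := by
    rintro _ ⟨y, hy, rfl⟩
    exact ⟨T y, hTO y hy, hcomm y⟩
  -- split the set
  set A := {x | x ∈ O ∧ x ∈ P ∧ T x ∉ P} with hA_def
  set B := {x | x ∈ ν '' O ∧ x ∈ P ∧ T x ∉ P} with hB_def
  have hsplit : {x | x ∈ O ∪ ν '' O ∧ x ∈ P ∧ T x ∉ P} = A ∪ B := by
    ext x
    simp only [hA_def, hB_def, Set.mem_setOf_eq, Set.mem_union]
    tauto
  have hABdisj : Disjoint A B := by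
    rw [Set.disjoint_iff_inter_eq_empty]
    apply Set.eq_empty_of_subset_empty
    rw [← hdisj]
    rintro x ⟨⟨h1, _⟩, ⟨h2, _⟩⟩
    exact ⟨h1, h2⟩
  -- ν maps A onto the "entering" set of ν '' O
  have himg : ν '' A = {x | x ∈ ν '' O ∧ x ∉ P ∧ T x ∈ P} := by
    ext y
    constructor
    · rintro ⟨x, ⟨hxO, hxP, hxTP⟩, rfl⟩
      refine ⟨⟨x, hxO, rfl⟩, (hνP x).mp hxP, ?_⟩
      rw [← hcomm]
      exact (hνP' (T x)).mp hxTP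
    · rintro ⟨⟨x, hxO, rfl⟩, hyP, hyTP⟩
      refine ⟨x, ⟨hxO, ?_, ?_⟩, rfl⟩
      · by_contra h
        exact hyP ((hνP' x).mp h)
      · intro h
        rw [← hcomm] at hyTP
        exact ((hνP (T x)).mp h) hyTP
  have hcardA : A.ncard = Set.ncard {x | x ∈ ν '' O ∧ x ∉ P ∧ T x ∈ P} := by
    rw [← himg, Set.ncard_image_of_injective _ hν_inv.injective]
  have hcardB : Set.ncard {x | x ∈ ν '' O ∧ x ∉ P ∧ T x ∈ P} = B.ncard :=
    (cross_balance T P (ν '' O) hTνO).symm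
  rw [hsplit, Set.ncard_union_eq hABdisj (Set.toFinite A) (Set.toFinite B),
    hcardA, hcardB]
  exact Even.add_self _
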